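/- Let $(Q,*,/)$ be a 2-reductive quandle. Then for all integers $n,m$, the structure $(Q,*^n,*^m,*,/)$ is an oriented bondle, where $x*^k y = \rho_y^k(x)$ with $\rho_y(x) = x*y$. -/

import Mathlib

def IsRightQuasigroup {Q : Type*} (mul div : Q → Q → Q) : Prop :=
  (∀ x y, div (mul x y) y = x) ∧ (∀ x y, mul (div x y) y = x)

def IsQuandle {Q : Type*} (mul div : Q → Q → Q) : Prop :=
  IsRightQuasigroup mul div ∧ (∀ x, mul x x = x) ∧
  (∀ x y z, mul (mul x y) z = mul (mul x z) (mul y z))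

def IsOrientedSingquandle {Q : Type*} (cdot mul div : Q → Q → Q) : Prop :=
  IsQuandle mul div ∧
  (∀ x y z, mul (cdot x y) z = cdot (mul x z) (mul y z)) ∧
  (∀ x y z, mul (mul z y) x = mul (mul z (cdot x y)) (cdot (mul y x) x))

def IsOrientedBondle {Q : Type*} (circ bull mul div : Q → Q → Q) : Prop :=
  IsOrientedSingquandle circ mul div ∧
  (∀ x y z, mul (bull x y) z = bull (mul x z) (mul y z)) ∧
  (∀ x y z, mul (div z (bull y x)) x = mul (div z y) (bull x y)) ∧
  (∀ x y, div (bull y x) y = bull y (div x (bull x y)))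

theorem two_reductive_bondle {Q : Type*} (mul div : Q → Q → Q)
    (hq : IsQuandle mul div)
    (h2r : ∀ x y z u : Q, mul x (mul y z) = mul x (mul y u))
    (ρ : Q → Equiv.Perm Q) (hρ : ∀ y x, ρ y x = mul x y) (n m : ℤ) :
    IsOrientedBondle (fun x y => ((ρ y) ^ n) x) (fun x y => ((ρ y) ^ m) x) mul div := by
  obtain ⟨⟨hdm, hmd⟩, hid, hsd⟩ := hq
  have h0 : ∀ x y z, mul x (mul y z) = mul x y := fun x y z => by
    rw [h2r x y z y, hid]
  have hρmul : ∀ x y, ρ (mul x y) = ρ x := fun x y => by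
    ext z; rw [hρ, hρ, h0]
  have hρdiv : ∀ x y, ρ (div x y) = ρ x := fun x y => by
    conv_rhs => rw [← hmd x y]
    rw [hρmul]
  have hinv : ∀ y z, (ρ y)⁻¹ z = div z y := fun y z =>
    (ρ y).injective (by rw [Equiv.Perm.coe_inv, Equiv.apply_symm_apply, hρ, hmd])
  have hcomm : ∀ a b, Commute (ρ a) (ρ b) := fun a b => by
    ext x
    simp only [Equiv.Perm.mul_apply, hρ]
    rw [hsd x b a, h0]
  have hρzpow : ∀ (k : ℤ) (y x : Q), ρ (((ρ y) ^ k) x) = ρ x := by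
    intro k
    induction k using Int.induction_on with
    | zero => simp
    | succ i ih =>
      intro y x
      have h1 : ((ρ y) ^ ((i : ℤ) + 1)) x = ((ρ y) ^ (i : ℤ)) (ρ y x) := by
        rw [zpow_add_one]; rfl
      rw [h1, ih, hρ, hρmul]
    | pred i ih =>
      intro y x
      have h1 : ((ρ y) ^ (-(i : ℤ) - 1)) x = ((ρ y) ^ (-(i : ℤ))) ((ρ y)⁻¹ x) := by
        rw [zpow_sub_one]; rfl
      rw [h1, ih, hinv, hρdiv]
  have hρinv : ∀ w x, ρ ((ρ w)⁻¹ x) = ρ x := fun w x => by rw [hinv, hρdiv]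
  have hρρ : ∀ x y, ρ (ρ x y) = ρ y := fun x y => by rw [hρ, hρmul]
  have happ : ∀ (f g : Equiv.Perm Q), f = g → ∀ x, f x = g x := by
    rintro f g rfl x; rfl
  refine ⟨⟨⟨⟨hdm, hmd⟩, hid, hsd⟩, ?_, ?_⟩, ?_, ?_, ?_⟩
  · intro x y z
    simp only [← hρ]
    rw [hρρ]
    exact happ _ _ ((hcomm z y).zpow_right n) x
  · intro x y z
    simp only [← hρ]
    rw [hρzpow, hρzpow, hρ x y, hρmul]
    exact happ _ _ (hcomm x y) z
  · intro x y z
    simp only [← hρ]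
    rw [hρρ]
    exact happ _ _ ((hcomm z y).zpow_right m) x
  · intro x y z
    simp only [← hρ, ← hinv]
    rw [hρzpow, hρzpow]
  · intro x y
    simp only [← hρ, ← hinv]
    rw [hρinv]
    have hyy : (ρ y)⁻¹ y = y :=
      (ρ y).injective (by rw [Equiv.Perm.coe_inv, Equiv.apply_symm_apply, hρ, hid])
    calc (ρ y)⁻¹ (((ρ x) ^ m) y) = ((ρ x) ^ m) ((ρ y)⁻¹ y) :=
          happ _ _ (((hcomm y x).zpow_right m).inv_left) y
      _ = ((ρ x) ^ m) y := by rw [hyy]
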